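/- arXiv:2411.17630 — 3 statements merged into one kernel-verified Lean document; each statement's English description precedes it below -/
import Mathlib

section
/- Let M, L ≥ 1, let w₁, …, w_M ∈ ℂ^L, and let P be a diagonal projector on ℂ^L. Form the augmented vector ψ = [Pw₁; …; Pw_M; (1−P)w₁; …; (1−P)w_M] ∈ ℂ^{2ML}, and let Õ_Σ := E₀₀ ⊗ J_M ⊗ I_L, where E₀₀ = [[1,0],[0,0]] = ½(I + Z) (2×2), J_M is the M×M all-ones matrix, and I_L is the L×L identity. Then ψᴴ Õ_Σ ψ = ‖Σ_{i=1}^M P w_i‖². -/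
open Matrix Kronecker

/-- Correctness of the generalized multi-state observable: for sub-states
`w₁, …, w_M ∈ ℂ^L`, a diagonal projector `P`, the augmented vector
`ψ = [Pw₁; …; Pw_M; (1−P)w₁; …; (1−P)w_M]` and the observable
`Õ_Σ = E₀₀ ⊗ J_M ⊗ I_L` (with `E₀₀ = [[1,0],[0,0]] = ½(I+Z)`, `J_M` all-ones,
`I_L` the identity), one has `ψᴴ Õ_Σ ψ = ‖∑ i, P wᵢ‖²` (with `‖y‖² = yᴴy`). -/
theorem augmented_multistate_observable_expectation
    (M L : ℕ) (hM : 1 ≤ M) (hL : 1 ≤ L)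
    (w : Fin M → Fin L → ℂ) (d : Fin L → ℂ) (hd : ∀ i, d i = 0 ∨ d i = 1) :
    let P : Matrix (Fin L) (Fin L) ℂ := diagonal d
    let E00 : Matrix Bool Bool ℂ := Matrix.of fun i j => if i = false ∧ j = false then 1 else 0
    let J : Matrix (Fin M) (Fin M) ℂ := Matrix.of fun _ _ => 1
    let IL : Matrix (Fin L) (Fin L) ℂ := 1
    let ψ : Bool × Fin M × Fin L → ℂ := fun p =>
      if p.1 then ((1 - P).mulVec (w p.2.1)) p.2.2 else (P.mulVec (w p.2.1)) p.2.2
    star ψ ⬝ᵥ (E00 ⊗ₖ (J ⊗ₖ IL)).mulVec ψ =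
      star (∑ i, P.mulVec (w i)) ⬝ᵥ (∑ i, P.mulVec (w i)) := by
  intro P E00 J IL ψ
  simp only [dotProduct, mulVec, Pi.star_apply, Fintype.sum_prod_type,
    kroneckerMap_apply, Matrix.sum_apply, Finset.sum_apply, Pi.star_apply,
    Fintype.sum_bool, E00, J, IL, ψ, of_apply, one_apply]
  simp only [Bool.false_eq_true, Bool.true_eq_false, and_false, and_true, and_self, if_true,
    if_false, zero_mul, mul_zero, Finset.sum_const_zero, add_zero, zero_add, one_mul, mul_one,
    ite_mul, mul_ite, true_and, false_and]
  rw [Finset.sum_comm]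
  simp only [ite_self, Finset.sum_const_zero, zero_add, add_zero, mul_zero,
    Finset.sum_ite_eq, Finset.mem_univ, if_true]
  rw [Finset.sum_comm]
  refine Finset.sum_congr rfl fun l _ => ?_
  rw [← Finset.sum_mul, ← star_sum]
end

section
/- Let H be an n×n complex matrix, S ≥ 1, t : Fin S → ℝ, and τ ∈ ℝ. Let blockDiagonal denote the SN×SN block-diagonal matrix built from S blocks of size n×n. Then exp(−iτ · blockDiagonal(s ↦ H)) · exp(−i · blockDiagonal(s ↦ t(s)·H)) = blockDiagonal(s ↦ exp(−i(τ + t(s))·H)). In particular, evolving the stacked state [w₁; …; w_S] first under the synchronization Hamiltonian H^sync = blockDiagonal(s ↦ t(s)·H) and then under H^mult = blockDiagonal(s ↦ H) for time τ evolves the s-th sub-state by exp(−i(τ + t(s))H). -/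
open Matrix NormedSpace

lemma pi_exp_apply {S n : ℕ} (v : Fin S → Matrix (Fin n) (Fin n) ℂ) (s : Fin S) :
    exp v s = exp (v s) := by
  letI : SeminormedRing (Matrix (Fin n) (Fin n) ℂ) := Matrix.linftyOpSemiNormedRing
  letI : NormedRing (Matrix (Fin n) (Fin n) ℂ) := Matrix.linftyOpNormedRing
  letI : NormedAlgebra ℂ (Matrix (Fin n) (Fin n) ℂ) := Matrix.linftyOpNormedAlgebra
  letI : NormedAlgebra ℚ (Matrix (Fin n) (Fin n) ℂ) := NormedAlgebra.restrictScalars ℚ ℂ _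
  exact Pi.coe_exp v s

lemma bd_key (n S : ℕ) (H : Matrix (Fin n) (Fin n) ℂ) (t : Fin S → ℝ) (τ : ℝ) :
    exp ((-(Complex.I * (τ : ℂ))) • blockDiagonal fun _ : Fin S => H) *
        exp ((-Complex.I) • blockDiagonal fun s : Fin S => (t s : ℂ) • H) =
      blockDiagonal fun s : Fin S => exp ((-(Complex.I * ((τ : ℂ) + (t s : ℂ)))) • H) := by
  rw [← blockDiagonal_smul, ← blockDiagonal_smul, Matrix.exp_blockDiagonal,
    Matrix.exp_blockDiagonal, ← blockDiagonal_mul]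
  refine congrArg _ (funext fun s => ?_)
  rw [pi_exp_apply, pi_exp_apply, Pi.smul_apply, Pi.smul_apply, ← Matrix.exp_add_of_commute]
  · congr 1
    rw [smul_smul]
    module
  · exact (((Commute.refl H).smul_right ((t s : ℂ))).smul_right (-Complex.I)).smul_left
      (-(Complex.I * (τ : ℂ)))

/-- Correctness of the synchronization procedure for asynchronous sources:
`exp(−iτ·BD(s ↦ H)) · exp(−i·BD(s ↦ t(s)·H)) = BD(s ↦ exp(−i(τ+t(s))·H))`, so evolving
the stacked state first under `H^sync = BD(s ↦ t(s)·H)` and then under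
`H^mult = BD(s ↦ H)` for time `τ` evolves the `s`-th sub-state by `exp(−i(τ+t(s))H)`. -/
theorem synchronization_block_diagonal_evolution
    (n S : ℕ) (hS : 1 ≤ S) (H : Matrix (Fin n) (Fin n) ℂ) (t : Fin S → ℝ) (τ : ℝ) :
    (exp ((-(Complex.I * (τ : ℂ))) • blockDiagonal fun _ : Fin S => H) *
        exp ((-Complex.I) • blockDiagonal fun s : Fin S => (t s : ℂ) • H) =
      blockDiagonal fun s : Fin S => exp ((-(Complex.I * ((τ : ℂ) + (t s : ℂ)))) • H)) ∧
    (∀ (w : Fin S → Fin n → ℂ) (s : Fin S) (i : Fin n),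
      ((exp ((-(Complex.I * (τ : ℂ))) • blockDiagonal fun _ : Fin S => H) *
          exp ((-Complex.I) • blockDiagonal fun s : Fin S => (t s : ℂ) • H)).mulVec
        (fun p : Fin n × Fin S => w p.2 p.1)) (i, s) =
        (exp ((-(Complex.I * ((τ : ℂ) + (t s : ℂ)))) • H)).mulVec (w s) i) := by
  refine ⟨bd_key n S H t τ, fun w s i => ?_⟩
  rw [bd_key n S H t τ]
  simp [mulVec, dotProduct, Fintype.sum_prod_type, blockDiagonal_apply, ite_mul,
    Finset.sum_ite_eq', mul_comm]
end

section
/- Fix N_x, N_y ≥ 2 and grid spacings Δx, Δy > 0. Index pressure points by U := Fin N_x × Fin N_y and staggered velocity points by V := (Fin (N_x−1) × Fin N_y) ⊕ (Fin N_x × Fin (N_y−1)). Define the discrete gradient G as the real V×U matrix with G(inl(k,j), (ℓ,m)) = ([ℓ = k+1] − [ℓ = k])·[m = j]/Δx and G(inr(k,j), (ℓ,m)) = ([m = j+1] − [m = j])·[ℓ = k]/Δy, and the discrete divergence D as the real U×V matrix with D((ℓ,m), inl(k,j)) = ([k = ℓ] − [k+1 = ℓ])·[j = m]/Δx and D((ℓ,m),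 inr(k,j)) = ([j = m] − [j+1 = m])·[ℓ = k]/Δy, where [·] is the 0/1 indicator and k+1, j+1 denote the canonical embeddings Fin(n−1) → Fin n shifted by one versus unshifted. Then D = −Gᵀ, and consequently the block matrix A = [[0, −D], [−G, 0]] (with zero blocks of sizes U×U and V×V) satisfies Aᵀ = −A, i.e., A is skew-symmetric. -/
open Matrix

/-- Anti-transpose property of the staggered-grid finite-difference gradient and
divergence in 2D: with `N_x = nx + 1 ≥ 2`, `N_y = ny + 1 ≥ 2` pressure points per
direction and velocity points staggered half a cell in their own direction
(boundary-normal velocities omitted), the discrete gradient `G` and divergence `D`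
satisfy `D = −Gᵀ`, hence the block operator `A = [[0, −D], [−G, 0]]` is
skew-symmetric: `Aᵀ = −A`. -/
theorem staggered_grid_div_eq_neg_grad_transpose
    (nx ny : ℕ) (hnx : 1 ≤ nx) (hny : 1 ≤ ny) (Δx Δy : ℝ) (hΔx : 0 < Δx) (hΔy : 0 < Δy) :
    let U := Fin (nx + 1) × Fin (ny + 1)
    let V := (Fin nx × Fin (ny + 1)) ⊕ (Fin (nx + 1) × Fin ny)
    let G : Matrix V U ℝ := Matrix.of fun kv lm =>
      match kv with
      | Sum.inl (k, j) =>
          (((if lm.1 = k.succ then (1 : ℝ) else 0) -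
              (if lm.1 = k.castSucc then 1 else 0)) *
            (if lm.2 = j then 1 else 0)) / Δx
      | Sum.inr (k, j) =>
          (((if lm.2 = j.succ then (1 : ℝ) else 0) -
              (if lm.2 = j.castSucc then 1 else 0)) *
            (if lm.1 = k then 1 else 0)) / Δy
    let D : Matrix U V ℝ := Matrix.of fun lm kv =>
      match kv with
      | Sum.inl (k, j) =>
          (((if k.castSucc = lm.1 then (1 : ℝ) else 0) -
              (if k.succ = lm.1 then 1 else 0)) *
            (if j = lm.2 then 1 else 0)) / Δx
      | Sum.inr (k, j) =>
          (((if j.castSucc = lm.2 then (1 : ℝ) else 0) -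
              (if j.succ = lm.2 then 1 else 0)) *
            (if k = lm.1 then 1 else 0)) / Δy
    let A : Matrix (U ⊕ V) (U ⊕ V) ℝ := fromBlocks 0 (-D) (-G) 0
    D = -Gᵀ ∧ Aᵀ = -A := by
  intro U V G D A
  have hDG : D = -Gᵀ := by
    ext lm kv
    cases kv with
    | inl kj =>
        obtain ⟨k, j⟩ := kj
        simp only [D, G, Matrix.neg_apply, Matrix.transpose_apply, Matrix.of_apply]
        simp only [eq_comm]
        ring
    | inr kj =>
        obtain ⟨k, j⟩ := kj
        simp only [D, G, Matrix.neg_apply, Matrix.transpose_apply, Matrix.of_apply]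
        simp only [eq_comm]
        ring
  refine ⟨hDG, ?_⟩
  show (fromBlocks 0 (-D) (-G) 0)ᵀ = -(fromBlocks 0 (-D) (-G) 0)
  rw [Matrix.fromBlocks_transpose, Matrix.fromBlocks_neg, hDG]
  simp
end
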